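/- Let n ≥ 1, d ≥ 2 be integers. Then Σ_{v∈ℤ/n} f_v = 0 in ℤ[x]/(x^n − 1), and the polynomials f_v with v ∈ ℤ/n, v ≠ 0, are linearly independent over ℚ in ℚ[x]/(x^n − 1). Consequently the sandpile group S(n,d) is a finite abelian group. -/

import Mathlib

open Polynomial Matrix

noncomputable section

/-- `Rq n` is the ring `ℤ[x]/(x^n - 1)`. -/
abbrev Rq (n : ℕ) : Type := Polynomial ℤ ⧸ Ideal.span ({X ^ n - 1} : Set (Polynomial ℤ))

/-- Projection `ℤ[x] → ℤ[x]/(x^n-1)`. -/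
def mkR (n : ℕ) : Polynomial ℤ →ₐ[ℤ] Rq n := Ideal.Quotient.mkₐ ℤ _

/-- Evaluation at 1, `ℤ[x]/(x^n-1) → ℤ`. -/
def evalOne (n : ℕ) : Rq n →ₐ[ℤ] ℤ :=
  Ideal.Quotient.liftₐ _ (aeval (1 : ℤ)) (by
    intro a ha
    have h : Ideal.span ({X ^ n - 1} : Set (Polynomial ℤ)) ≤
        RingHom.ker (aeval (1 : ℤ) : Polynomial ℤ →ₐ[ℤ] ℤ) := by
      rw [Ideal.span_le]
      rintro b ⟨rfl⟩
      simp [RingHom.mem_ker]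
    exact h ha)

/-- `𝒵_n`, the ℤ-submodule of elements of `ℤ[x]/(x^n-1)` vanishing at 1. -/
def Znd (n : ℕ) : Submodule ℤ (Rq n) := LinearMap.ker (evalOne n).toLinearMap

/-- `e_v = x^v - 1`. -/
def eR (n : ℕ) (v : ZMod n) : Rq n := mkR n (X ^ v.val - 1)

lemma eR_mem (n : ℕ) (v : ZMod n) : eR n v ∈ Znd n := by
  show evalOne n (mkR n (X ^ v.val - 1)) = 0
  exact (by simp : aeval (1 : ℤ) (X ^ v.val - 1 : Polynomial ℤ) = 0)

/-- `e_v` as an element of `𝒵_n`. -/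
def eZ (n : ℕ) (v : ZMod n) : Znd n := ⟨eR n v, eR_mem n v⟩

/-- `ε_v = d·e_v − e_{d·v}`. -/
def epsR (n d : ℕ) (v : ZMod n) : Rq n := (d : ℤ) • eR n v - eR n ((d : ZMod n) * v)

/-- `ℰ_{n,d}`: the ℤ-submodule generated by the `ε_v`, `v ≠ 0`. -/
def Esub (n d : ℕ) : Submodule ℤ (Rq n) :=
  Submodule.span ℤ {x | ∃ v : ZMod n, v ≠ 0 ∧ x = epsR n d v}

/-- The sand dune group `Σ(n,d) = 𝒵_n / ℰ_{n,d}` of `DB(n,d)`. -/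
abbrev SigmaGrp (n d : ℕ) : Type :=
  Znd n ⧸ (Esub n d).comap (Znd n).subtype

/-- Projection `𝒵_n → Σ(n,d)`. -/
def sigmaMk (n d : ℕ) (a : Znd n) : SigmaGrp n d := Submodule.Quotient.mk a

/-- `f_v = d·x^v − x^{d·v}(1 + x + ⋯ + x^{d−1})`. -/
def fR (n d : ℕ) (v : ZMod n) : Rq n :=
  mkR n ((d : Polynomial ℤ) * X ^ v.val -
    X ^ (((d : ZMod n) * v).val) * (∑ i ∈ Finset.range d, X ^ i))

/-- The `R`-span of the `f_v`, `v ≠ 0`, where `R = ℤ[x]/(x^n-1)`. -/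
def Fsub (n d : ℕ) : Submodule (Rq n) (Rq n) :=
  Submodule.span (Rq n) {x | ∃ v : ZMod n, v ≠ 0 ∧ x = fR n d v}

/-- The sandpile (critical) group `S(n,d)` of the generalized de Bruijn graph `DB(n,d)`:
the quotient of `𝒵_n` by the `R`-span of the `f_v`, `v ≠ 0`. -/
abbrev SGrp (n d : ℕ) : Type :=
  Znd n ⧸ ((Fsub n d).restrictScalars ℤ).comap (Znd n).subtype

/-- `RQn n` is the ring `ℚ[x]/(x^n - 1)`. -/
abbrev RQn (n : ℕ) : Type := Polynomial ℚ ⧸ Ideal.span ({X ^ n - 1} : Set (Polynomial ℚ))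

/-- Projection `ℚ[x] → ℚ[x]/(x^n-1)`. -/
def mkQ (n : ℕ) : Polynomial ℚ →ₐ[ℚ] RQn n := Ideal.Quotient.mkₐ ℚ _

/-- `e_v = x^v - 1` over `ℚ`. -/
def eQ (n : ℕ) (v : ZMod n) : RQn n := mkQ n (X ^ v.val - 1)

/-- `ε_v = d·e_v − e_{d·v}` over `ℚ`. -/
def epsQ (n d : ℕ) (v : ZMod n) : RQn n := (d : ℚ) • eQ n v - eQ n ((d : ZMod n) * v)

/-- `f_v = d·x^v − x^{d·v}(1 + x + ⋯ + x^{d−1})` over `ℚ`. -/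
def fQ (n d : ℕ) (v : ZMod n) : RQn n :=
  mkQ n ((d : Polynomial ℚ) * X ^ v.val -
    X ^ (((d : ZMod n) * v).val) * (∑ i ∈ Finset.range d, X ^ i))


/-! ### Auxiliary material for the proof -/

section Aux

variable {n d : ℕ} [NeZero n]

omit [NeZero n] in
lemma sum_range_mul_zmod {M : Type*} [AddCommMonoid M] (F : ZMod n → M) (d : ℕ) :
    ∑ k ∈ Finset.range (d * n), F (k : ZMod n) = d • ∑ k ∈ Finset.range n, F (k : ZMod n) := by
  induction d with
  | zero => simp
  | succ d ih =>
      rw [Nat.succ_mul, Finset.sum_range_add, ih, succ_nsmul]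
      congr 1
      apply Finset.sum_congr rfl
      intro k _
      congr 1
      push_cast [ZMod.natCast_self]
      ring

lemma sum_range_zmod {M : Type*} [AddCommMonoid M] (F : ZMod n → M) :
    ∑ k ∈ Finset.range n, F (k : ZMod n) = ∑ v : ZMod n, F v := by
  refine Finset.sum_nbij' (i := fun k : ℕ => (k : ZMod n)) (j := fun v : ZMod n => v.val)
    ?_ ?_ ?_ ?_ ?_
  · intros; exact Finset.mem_univ _
  · intro v _; exact Finset.mem_range.2 (ZMod.val_lt v)
  · intro k hk; exact ZMod.val_cast_of_lt (Finset.mem_range.1 hk)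
  · intro v _; simp [ZMod.natCast_val, ZMod.cast_id]
  · intros; rfl

lemma sum_pairs {M : Type*} [AddCommMonoid M] (F : ZMod n → M) (d : ℕ) (hd : 0 < d) :
    ∑ v : ZMod n, ∑ i ∈ Finset.range d, F ((d : ZMod n) * v + (i : ZMod n))
      = d • ∑ v : ZMod n, F v := by
  rw [← sum_range_zmod F, ← sum_range_mul_zmod F d]
  rw [← Finset.sum_product']
  refine Finset.sum_nbij' (i := fun p : ZMod n × ℕ => d * p.1.val + p.2)
    (j := fun k : ℕ => ((((k / d : ℕ) : ZMod n), k % d) : ZMod n × ℕ)) ?_ ?_ ?_ ?_ ?_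
  · rintro ⟨v, i⟩ hp
    simp only [Finset.mem_product, Finset.mem_range] at hp ⊢
    have hv := ZMod.val_lt v
    calc d * v.val + i < d * v.val + d := by omega
      _ ≤ d * n := by nlinarith
  · intro k hk
    simp only [Finset.mem_product, Finset.mem_range, Finset.mem_univ, true_and] at hk ⊢
    exact Nat.mod_lt _ hd
  · rintro ⟨v, i⟩ hp
    simp only [Finset.mem_product, Finset.mem_range, Finset.mem_univ, true_and] at hp
    have h1 : (d * v.val + i) / d = v.val := by
      rw [Nat.mul_add_div hd, Nat.div_eq_of_lt hp, Nat.add_zero]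
    have h2 : (d * v.val + i) % d = i := by
      rw [Nat.mul_add_mod, Nat.mod_eq_of_lt hp]
    simp [h1, h2, ZMod.natCast_val, ZMod.cast_id]
  · intro k hk
    simp only [Finset.mem_range] at hk
    have hk' : k / d < n := by
      rw [Nat.div_lt_iff_lt_mul hd, Nat.mul_comm]; omega
    simp only [ZMod.val_cast_of_lt hk']
    exact Nat.div_add_mod k d
  · rintro ⟨v, i⟩ hp
    simp only [Finset.mem_product, Finset.mem_range, Finset.mem_univ, true_and] at hp
    congr 1
    push_cast [ZMod.natCast_val, ZMod.cast_id]
    ring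

/-! #### Part 1 : the sum of the `f_v` vanishes -/

def xe (n : ℕ) [NeZero n] (a : ZMod n) : Rq n := mkR n (X ^ a.val)

lemma mkR_X_pow (k : ℕ) : mkR n (X ^ k) = xe n (k : ZMod n) := by
  unfold xe
  rw [ZMod.val_natCast]
  have hk : n * (k / n) + k % n = k := Nat.div_add_mod k n
  have hdvd : (X ^ n - 1 : Polynomial ℤ) ∣ X ^ k - X ^ (k % n) := by
    have h2 : (X : Polynomial ℤ) ^ k - X ^ (k % n)
        = X ^ (k % n) * (((X ^ n) ^ (k / n)) - 1 ^ (k / n)) := by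
      rw [one_pow, mul_sub, mul_one, ← pow_mul, ← pow_add, Nat.add_comm, hk]
    rw [h2]
    exact Dvd.dvd.mul_left (sub_dvd_pow_sub_pow _ _ _) _
  have h0 : mkR n (X ^ k - X ^ (k % n)) = 0 := by
    simp only [mkR, Ideal.Quotient.mkₐ_eq_mk, Ideal.Quotient.eq_zero_iff_mem]
    exact Ideal.mem_span_singleton.2 hdvd
  rw [_root_.map_sub, sub_eq_zero] at h0
  exact h0

lemma fR_eq (v : ZMod n) :
    fR n d v = (d : ℤ) • xe n v - ∑ i ∈ Finset.range d, xe n ((d : ZMod n) * v + (i : ZMod n)) := by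
  unfold fR
  rw [_root_.map_sub, _root_.map_mul, _root_.map_mul, _root_.map_sum]
  congr 1
  · show (mkR n) ↑d * xe n v = _
    rw [_root_.map_natCast, zsmul_eq_mul]
    norm_cast
  · rw [Finset.mul_sum]
    apply Finset.sum_congr rfl
    intro i _
    rw [← _root_.map_mul, ← pow_add, mkR_X_pow]
    congr 1
    push_cast [ZMod.natCast_val, ZMod.cast_id]
    ring

lemma sum_fR (hd : 0 < d) : ∑ v : ZMod n, fR n d v = 0 := by
  simp only [fR_eq]
  rw [Finset.sum_sub_distrib, sum_pairs (xe n) d hd, ← Finset.smul_sum, sub_eq_zero,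
    natCast_zsmul]

/-! #### Part 2 : linear independence over `ℚ` -/

abbrev MA (n : ℕ) : Type := AddMonoidAlgebra ℚ (ZMod n)

def sgen (n : ℕ) : MA n := AddMonoidAlgebra.single (1 : ZMod n) (1 : ℚ)

omit [NeZero n] in
lemma sgen_pow (k : ℕ) : (sgen n) ^ k = AddMonoidAlgebra.single (k : ZMod n) (1 : ℚ) := by
  rw [sgen, AddMonoidAlgebra.single_pow, one_pow, nsmul_eq_mul, mul_one]

def Phi (n : ℕ) [NeZero n] : RQn n →ₐ[ℚ] MA n :=
  Ideal.Quotient.liftₐ _ (aeval (sgen n)) (by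
    intro a ha
    have h : Ideal.span ({X ^ n - 1} : Set (Polynomial ℚ)) ≤
        RingHom.ker (aeval (sgen n) : Polynomial ℚ →ₐ[ℚ] MA n) := by
      rw [Ideal.span_le]
      rintro b ⟨rfl⟩
      simp only [RingHom.mem_ker, SetLike.mem_coe, _root_.map_sub, _root_.map_pow, _root_.map_one, aeval_X]
      rw [sgen_pow, ZMod.natCast_self]
      rw [sub_eq_zero]
      rfl
    exact h ha)

lemma Phi_mkQ (p : Polynomial ℚ) : Phi n (mkQ n p) = aeval (sgen n) p := by
  rfl

def Esingle (n : ℕ) (a : ZMod n) : MA n := AddMonoidAlgebra.single a (1 : ℚ)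

lemma Phi_fQ (v : ZMod n) :
    Phi n (fQ n d v) = (d : ℚ) • Esingle n v
      - ∑ i ∈ Finset.range d, Esingle n ((d : ZMod n) * v + (i : ZMod n)) := by
  rw [fQ, Phi_mkQ]
  rw [_root_.map_sub, _root_.map_mul, _root_.map_mul, _root_.map_sum]
  congr 1
  · rw [_root_.map_natCast, _root_.map_pow, aeval_X, sgen_pow, ZMod.natCast_val, ZMod.cast_id]
    rw [Esingle, AddMonoidAlgebra.natCast_def, AddMonoidAlgebra.single_mul_single, zero_add,
      AddMonoidAlgebra.smul_single', mul_one]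
  · rw [_root_.map_pow, aeval_X, Finset.mul_sum]
    apply Finset.sum_congr rfl
    intro i _
    rw [_root_.map_pow, aeval_X, sgen_pow, sgen_pow, AddMonoidAlgebra.single_mul_single, one_mul]
    rw [Esingle]
    congr 1
    push_cast [ZMod.natCast_val, ZMod.cast_id]
    ring

/-- number of `i < d` with `d*v + i = w`, as a rational number. -/
def Nw (n d : ℕ) (v w : ZMod n) : ℚ :=
  ∑ i ∈ Finset.range d, if (d : ZMod n) * v + (i : ZMod n) = w then 1 else 0

omit [NeZero n] in
lemma Nw_nonneg (v w : ZMod n) : 0 ≤ Nw n d v w := by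
  apply Finset.sum_nonneg
  intro i _
  split_ifs <;> norm_num

lemma Nw_sum (hd : 0 < d) (w : ZMod n) : ∑ v : ZMod n, Nw n d v w = d := by
  have h := sum_pairs (n := n) (fun u => if u = w then (1 : ℚ) else 0) d hd
  simpa [Nw] using h

omit [NeZero n] in
lemma Nw_ge_one (v : ZMod n) (i : ℕ) (hi : i < d) :
    1 ≤ Nw n d v ((d : ZMod n) * v + (i : ZMod n)) := by
  have h := Finset.single_le_sum
    (f := fun j : ℕ => if (d : ZMod n) * v + (j : ZMod n) = (d : ZMod n) * v + (i : ZMod n)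
      then (1:ℚ) else 0)
    (fun j _ => by split_ifs <;> norm_num) (Finset.mem_range.2 hi)
  simpa [Nw] using h

lemma key (hd : 2 ≤ d) (C : ZMod n → ℚ) (h0 : C 0 = 0)
    (hrel : ∀ w, (d : ℚ) * C w = ∑ v : ZMod n, C v * Nw n d v w) (u : ZMod n) : C u ≤ 0 := by
  have hd0 : 0 < d := by omega
  obtain ⟨w₀, -, hmax⟩ := Finset.exists_max_image Finset.univ C ⟨0, Finset.mem_univ 0⟩
  replace hmax : ∀ v : ZMod n, C v ≤ C w₀ := fun v => hmax v (Finset.mem_univ v)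
  set M := C w₀ with hM
  have step : ∀ (v : ZMod n) (i : ℕ), i < d → C ((d : ZMod n) * v + (i : ZMod n)) = M →
      C v = M := by
    intro v i hi hw
    set w := (d : ZMod n) * v + (i : ZMod n) with hwdef
    have h1 : ∑ u : ZMod n, C u * Nw n d u w = ∑ u : ZMod n, M * Nw n d u w := by
      rw [← Finset.mul_sum, Nw_sum hd0, ← hrel, hw]
      ring
    have hle : ∀ u ∈ Finset.univ, C u * Nw n d u w ≤ M * Nw n d u w := fun u _ =>
      mul_le_mul_of_nonneg_right (hmax u) (Nw_nonneg u w)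
    have heq := (Finset.sum_eq_sum_iff_of_le hle).1 h1 v (Finset.mem_univ v)
    have hN : 1 ≤ Nw n d v w := Nw_ge_one v i hi
    exact mul_right_cancel₀ (by linarith) heq
  have reach : ∀ (k : ℕ) (u : ZMod n) (j : ℕ), j < d ^ k →
      C ((d : ZMod n) ^ k * u + (j : ZMod n)) = M → C u = M := by
    intro k
    induction k with
    | zero =>
        intro u j hj h
        simp only [pow_zero] at hj
        have hj0 : j = 0 := by omega
        subst hj0
        simpa using h
    | succ k ih =>
        intro u j hj h
        have hdk : 0 < d ^ k := Nat.pow_pos hd0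
        have hq : j / d ^ k < d := by
          rw [Nat.div_lt_iff_lt_mul hdk]
          calc j < d ^ (k + 1) := hj
            _ = d * d ^ k := by rw [pow_succ, Nat.mul_comm]
        have hr : j % d ^ k < d ^ k := Nat.mod_lt _ hdk
        have hcast : ((d : ZMod n)) ^ (k+1) * u + (j : ZMod n)
            = (d : ZMod n) ^ k * ((d : ZMod n) * u + ((j / d ^ k : ℕ) : ZMod n))
              + ((j % d ^ k : ℕ) : ZMod n) := by
          have hj' : d ^ k * (j / d ^ k) + j % d ^ k = j := Nat.div_add_mod j (d ^ k)
          have hjc : ((j : ℕ) : ZMod n)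
              = (d : ZMod n) ^ k * ((j / d ^ k : ℕ) : ZMod n) + ((j % d ^ k : ℕ) : ZMod n) := by
            conv_lhs => rw [← hj']
            push_cast
            ring
          rw [hjc, pow_succ]
          ring
        have hC := ih ((d : ZMod n) * u + ((j / d ^ k : ℕ) : ZMod n)) (j % d ^ k) hr
          (by rw [← hcast]; exact h)
        exact step u (j / d ^ k) hq hC
  have hM0 : M = 0 := by
    have hn' : w₀.val < d ^ n :=
      lt_of_lt_of_le (lt_of_lt_of_le w₀.val_lt (Nat.le_of_lt (Nat.lt_two_pow_self (n := n))))
        (Nat.pow_le_pow_left hd n)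
    have h := reach n 0 w₀.val hn'
      (by simp [ZMod.natCast_val, ZMod.cast_id, hM])
    rw [← h0, h]
  calc C u ≤ M := hmax u
    _ = 0 := hM0

lemma fQ_linearIndependent (hd : 2 ≤ d) :
    LinearIndependent ℚ (fun v : {v : ZMod n // v ≠ 0} => fQ n d v.val) := by
  have hd0 : 0 < d := by omega
  apply LinearIndependent.of_comp (Phi n).toLinearMap
  rw [Fintype.linearIndependent_iff]
  intro g hg
  classical
  let C : ZMod n → ℚ := fun w => if h : w = 0 then 0 else g ⟨w, h⟩
  have hC0 : C 0 = 0 := by simp [C]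
  have hCne : ∀ (v : ZMod n) (h : v ≠ 0), C v = g ⟨v, h⟩ := fun v h => dif_neg h
  have h1 : ∑ v : ZMod n, C v • Phi n (fQ n d v)
      = ∑ v : {v : ZMod n // v ≠ 0}, g v • Phi n (fQ n d v.val) := by
    have e1 : ∑ v ∈ Finset.univ.filter (fun v : ZMod n => v ≠ 0), C v • Phi n (fQ n d v)
        = ∑ v : {v : ZMod n // v ≠ 0}, C v.val • Phi n (fQ n d v.val) :=
      Finset.sum_subtype _ (by simp) _
    rw [← Finset.sum_subset (Finset.subset_univ _) ?_, e1]
    · exact Finset.sum_congr rfl fun v _ => by rw [hCne v.val v.prop]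
    · intro x _ hx
      simp only [Finset.mem_filter, Finset.mem_univ, true_and, not_not] at hx
      subst hx
      rw [hC0, zero_smul]
  have hz : ∑ v : ZMod n, C v • Phi n (fQ n d v) = 0 := by
    rw [h1]
    simpa using hg
  have hrel : ∀ w, (d : ℚ) * C w = ∑ v : ZMod n, C v * Nw n d v w := by
    intro w
    have happ : (Finsupp.lapply w ∘ₗ (AddMonoidAlgebra.coeffLinearEquiv ℚ).toLinearMap : MA n →ₗ[ℚ] ℚ)
        (∑ v : ZMod n, C v • Phi n (fQ n d v)) = 0 := by
      rw [hz]; exact _root_.map_zero _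
    rw [_root_.map_sum] at happ
    simp only [_root_.map_smul, smul_eq_mul, Phi_fQ, _root_.map_sub, _root_.map_sum, Esingle,
      LinearMap.coe_comp, Function.comp_apply, LinearEquiv.coe_coe,
      AddMonoidAlgebra.coeffLinearEquiv_apply, AddMonoidAlgebra.coeff_single,
      Finsupp.lapply_apply, Finsupp.single_apply] at happ
    have h2 : ∑ v : ZMod n, C v * ((d : ℚ) * (if v = w then 1 else 0)) = C w * (d : ℚ) := by
      simp [mul_ite, Finset.sum_ite_eq']
    have h3 : ∑ v : ZMod n, C v * ((d : ℚ) * (if v = w then 1 else 0))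
        = ∑ v : ZMod n, C v * Nw n d v w := by
      rw [← sub_eq_zero, ← Finset.sum_sub_distrib]
      simpa [mul_sub, Nw, Finset.mul_sum] using happ
    rw [← h3, h2]
    ring
  have k1 := key hd C hC0 hrel
  have k2 := key hd (fun u => -C u) (by simp [hC0]) (fun w => by
    have h := hrel w
    calc (d : ℚ) * (-C w) = -((d : ℚ) * C w) := by ring
      _ = -∑ v : ZMod n, C v * Nw n d v w := by rw [h]
      _ = ∑ v : ZMod n, -(C v * Nw n d v w) := by rw [Finset.sum_neg_distrib]
      _ = ∑ v : ZMod n, (-C v) * Nw n d v w := by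
          apply Finset.sum_congr rfl
          intros
          ring)
  intro v
  have hCv : C v.val = g v := by
    rw [hCne v.val v.prop, Subtype.coe_eta]
  rw [← hCv]
  have := k2 v.val
  simp only [neg_nonpos] at this
  exact le_antisymm (k1 v.val) this

/-! #### Part 3 : finiteness of the sandpile group -/

lemma monicZ (hn : 1 ≤ n) : (X ^ n - 1 : Polynomial ℤ).Monic := by
  have := Polynomial.monic_X_pow_sub_C (1 : ℤ) (by omega : n ≠ 0)
  simpa using this

lemma monicQ (hn : 1 ≤ n) : (X ^ n - 1 : Polynomial ℚ).Monic := by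
  have := Polynomial.monic_X_pow_sub_C (1 : ℚ) (by omega : n ≠ 0)
  simpa using this

lemma finiteRq (hn : 1 ≤ n) : Module.Finite ℤ (Rq n) :=
  Module.Finite.of_basis (AdjoinRoot.powerBasis' (monicZ hn)).basis

lemma finiteRQn (hn : 1 ≤ n) : Module.Finite ℚ (RQn n) :=
  Module.Finite.of_basis (AdjoinRoot.powerBasis' (monicQ hn)).basis

lemma finrankRQn (hn : 1 ≤ n) : Module.finrank ℚ (RQn n) = n := by
  have h1 : Module.finrank ℚ (AdjoinRoot (X ^ n - 1 : Polynomial ℚ))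
      = (AdjoinRoot.powerBasis' (monicQ hn)).dim := by
    rw [Module.finrank_eq_card_basis (AdjoinRoot.powerBasis' (monicQ hn)).basis,
      Fintype.card_fin]
  rw [show Module.finrank ℚ (RQn n)
    = Module.finrank ℚ (AdjoinRoot (X ^ n - 1 : Polynomial ℚ)) from rfl]
  rw [h1, AdjoinRoot.powerBasis'_dim]
  have : (X ^ n - 1 : Polynomial ℚ) = X ^ n - C 1 := by rw [Polynomial.C_1]
  rw [this, Polynomial.natDegree_X_pow_sub_C]

/-- the natural map `ℤ[x]/(x^n-1) → ℚ[x]/(x^n-1)`. -/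
def iota (n : ℕ) : Rq n →+* RQn n :=
  Ideal.Quotient.lift _
    ((Ideal.Quotient.mk (Ideal.span ({X ^ n - 1} : Set (Polynomial ℚ)))).comp
      (Polynomial.mapRingHom (Int.castRingHom ℚ)))
    (by
      intro a ha
      rw [← RingHom.mem_ker]
      have h : Ideal.span ({X ^ n - 1} : Set (Polynomial ℤ)) ≤
          RingHom.ker ((Ideal.Quotient.mk (Ideal.span ({X ^ n - 1} : Set (Polynomial ℚ)))).comp
            (Polynomial.mapRingHom (Int.castRingHom ℚ))) := ?_
      · exact h ha
      rw [Ideal.span_le]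
      rintro b ⟨rfl⟩
      show (Ideal.Quotient.mk _) ((X ^ n - 1 : Polynomial ℤ).map (Int.castRingHom ℚ)) = 0
      have hmap : (X ^ n - 1 : Polynomial ℤ).map (Int.castRingHom ℚ) = X ^ n - 1 := by
        simp
      rw [hmap, Ideal.Quotient.eq_zero_iff_mem]
      exact Ideal.subset_span rfl)

lemma iota_mk (p : Polynomial ℤ) :
    iota n (mkR n p) = mkQ n (p.map (Int.castRingHom ℚ)) := rfl

lemma iota_injective (hn : 1 ≤ n) : Function.Injective (iota n) := by
  rw [RingHom.injective_iff_ker_eq_bot, RingHom.ker_eq_bot_iff_eq_zero]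
  intro x hx
  obtain ⟨p, rfl⟩ := Ideal.Quotient.mk_surjective x
  have hx' : (p.map (Int.castRingHom ℚ)) ∈ Ideal.span ({X ^ n - 1} : Set (Polynomial ℚ)) := by
    rw [← Ideal.Quotient.eq_zero_iff_mem]
    exact hx
  rw [Ideal.mem_span_singleton] at hx'
  have h0 : (p %ₘ (X ^ n - 1)).map (Int.castRingHom ℚ) = 0 := by
    rw [Polynomial.map_modByMonic _ (monicZ hn)]
    have : (X ^ n - 1 : Polynomial ℤ).map (Int.castRingHom ℚ) = X ^ n - 1 := by simp
    rw [this, Polynomial.modByMonic_eq_zero_iff_dvd (monicQ hn)]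
    exact hx'
  have h1 : p %ₘ (X ^ n - 1) = 0 := by
    have hinj : Function.Injective (Int.castRingHom ℚ) := Int.cast_injective
    rwa [Polynomial.map_eq_zero_iff hinj] at h0
  rw [Ideal.Quotient.eq_zero_iff_mem, Ideal.mem_span_singleton]
  rwa [← Polynomial.modByMonic_eq_zero_iff_dvd (monicZ hn)]

/-- Evaluation at 1 over `ℚ`. -/
def evalOneQ (n : ℕ) : RQn n →ₐ[ℚ] ℚ :=
  Ideal.Quotient.liftₐ _ (aeval (1 : ℚ)) (by
    intro a ha
    have h : Ideal.span ({X ^ n - 1} : Set (Polynomial ℚ)) ≤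
        RingHom.ker (aeval (1 : ℚ) : Polynomial ℚ →ₐ[ℚ] ℚ) := by
      rw [Ideal.span_le]
      rintro b ⟨rfl⟩
      rw [SetLike.mem_coe, RingHom.mem_ker, _root_.map_sub, _root_.map_pow, aeval_X,
        _root_.map_one, one_pow, sub_self]
    exact h ha)

lemma evalOneQ_mkQ (p : Polynomial ℚ) : evalOneQ n (mkQ n p) = aeval (1 : ℚ) p := by
  rfl

lemma evalOne_mkR (p : Polynomial ℤ) : evalOne n (mkR n p) = aeval (1 : ℤ) p := by
  rfl

lemma evalOneQ_iota (x : Rq n) : evalOneQ n (iota n x) = ((evalOne n x : ℤ) : ℚ) := by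
  obtain ⟨p, rfl⟩ := Ideal.Quotient.mk_surjective x
  have hmk : (Ideal.Quotient.mk (Ideal.span ({X ^ n - 1} : Set (Polynomial ℤ)))) p
      = mkR n p := rfl
  rw [hmk, iota_mk, evalOneQ_mkQ, evalOne_mkR]
  rw [Polynomial.aeval_def, Polynomial.eval₂_at_one, Polynomial.aeval_def,
    Polynomial.eval₂_at_one]
  rw [Polynomial.eval_map, Polynomial.eval₂_at_one]
  simp

lemma iota_fR (v : ZMod n) : iota n (fR n d v) = fQ n d v := by
  rw [fR, fQ, iota_mk]
  congr 1
  simp [Polynomial.map_sub, Polynomial.map_mul, Polynomial.map_pow, Polynomial.map_natCast,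
    Polynomial.map_sum]

/-- `ZndQ n`, kernel of evaluation at 1 over `ℚ`. -/
def ZndQ (n : ℕ) : Submodule ℚ (RQn n) := LinearMap.ker (evalOneQ n).toLinearMap

lemma fQ_mem_ZndQ (v : ZMod n) : fQ n d v ∈ ZndQ n := by
  rw [ZndQ, LinearMap.mem_ker]
  show evalOneQ n (fQ n d v) = 0
  rw [fQ, evalOneQ_mkQ]
  simp [Finset.sum_ite_eq', mul_comm]

lemma span_fQ_eq (hn : 1 ≤ n) (hd : 2 ≤ d) :
    Submodule.span ℚ (Set.range (fun v : {v : ZMod n // v ≠ 0} => fQ n d v.val)) = ZndQ n := by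
  haveI := finiteRQn (n := n) hn
  have hle : Submodule.span ℚ (Set.range (fun v : {v : ZMod n // v ≠ 0} => fQ n d v.val))
      ≤ ZndQ n := by
    rw [Submodule.span_le]
    rintro x ⟨v, rfl⟩
    exact fQ_mem_ZndQ v.val
  have hsurj : Function.Surjective (evalOneQ n) := fun q =>
    ⟨algebraMap ℚ (RQn n) q, by rw [AlgHom.commutes]; exact Algebra.algebraMap_self_apply q⟩
  have hrange : LinearMap.range (evalOneQ n).toLinearMap = ⊤ := by
    rw [LinearMap.range_eq_top]
    exact hsurj
  have hdim : Module.finrank ℚ (ZndQ n) = n - 1 := by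
    have hadd := LinearMap.finrank_range_add_finrank_ker (evalOneQ n).toLinearMap
    rw [hrange, finrank_top, Module.finrank_self, finrankRQn hn] at hadd
    have : Module.finrank ℚ (LinearMap.ker (evalOneQ n).toLinearMap) = n - 1 := by omega
    exact this
  have hcard : Fintype.card {v : ZMod n // v ≠ 0} = n - 1 := by
    have h1 := Fintype.card_subtype_compl (fun v : ZMod n => v = 0)
    rw [Fintype.card_subtype_eq (0 : ZMod n), ZMod.card n] at h1
    exact h1
  have hW : Module.finrank ℚ
      (Submodule.span ℚ (Set.range (fun v : {v : ZMod n // v ≠ 0} => fQ n d v.val)))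
      = n - 1 := by
    rw [finrank_span_eq_card (fQ_linearIndependent hd), hcard]
  exact Submodule.eq_of_le_of_finrank_le hle (by rw [hW, hdim])

lemma torsion_key (hn : 1 ≤ n) (hd : 2 ≤ d) (a : Rq n) (ha : evalOne n a = 0) :
    ∃ m : ℤ, m ≠ 0 ∧ m • a ∈ (Fsub n d).restrictScalars ℤ := by
  have hmem : iota n a ∈ ZndQ n := by
    rw [ZndQ, LinearMap.mem_ker]
    show evalOneQ n (iota n a) = 0
    rw [evalOneQ_iota, ha, Int.cast_zero]
  rw [← span_fQ_eq hn hd, Submodule.mem_span_range_iff_exists_fun] at hmem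
  obtain ⟨c, hc⟩ := hmem
  obtain ⟨b, hb⟩ := IsLocalization.exist_integer_multiples (nonZeroDivisors ℤ)
    Finset.univ c
  choose z hz using fun v : {v : ZMod n // v ≠ 0} => hb v (Finset.mem_univ v)
  refine ⟨(b : ℤ), nonZeroDivisors.coe_ne_zero b, ?_⟩
  have hker : iota n ((b : ℤ) • a - ∑ v : {v : ZMod n // v ≠ 0}, z v • fR n d v.val) = 0 := by
    rw [_root_.map_sub, _root_.map_zsmul, _root_.map_sum]
    simp_rw [_root_.map_zsmul, iota_fR]
    rw [sub_eq_zero, ← hc, Finset.smul_sum]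
    apply Finset.sum_congr rfl
    intro v _
    have hzv : ((z v : ℤ) : ℚ) = (b : ℤ) • c v := hz v
    rw [← Int.cast_smul_eq_zsmul ℚ (z v) (fQ n d v.val), hzv]
    rw [smul_assoc]
  have heq : (b : ℤ) • a = ∑ v : {v : ZMod n // v ≠ 0}, z v • fR n d v.val := by
    have h0 : iota n ((b : ℤ) • a - ∑ v : {v : ZMod n // v ≠ 0}, z v • fR n d v.val)
        = iota n 0 := by rw [hker, _root_.map_zero]
    have := iota_injective hn h0
    rwa [sub_eq_zero] at this
  rw [heq]
  apply Submodule.sum_mem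
  intro v _
  apply Submodule.smul_mem
  show fR n d v.val ∈ Fsub n d
  exact Submodule.subset_span ⟨v.val, v.prop, rfl⟩

set_option synthInstance.maxHeartbeats 1000000 in
set_option maxHeartbeats 1000000 in
lemma SGrp_finite (hn : 1 ≤ n) (hd : 2 ≤ d) : Finite (SGrp n d) := by
  haveI := finiteRq (n := n) hn
  haveI : IsNoetherian ℤ (Rq n) := isNoetherian_of_isNoetherianRing_of_finite ℤ (Rq n)
  haveI : Module.Finite ℤ (Znd n) := ⟨IsNoetherian.noetherian ⊤⟩
  haveI : Module.Finite ℤ (SGrp n d) := Module.Finite.quotient ℤ _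
  apply Module.finite_of_fg_torsion
  intro x
  obtain ⟨a, rfl⟩ := Submodule.Quotient.mk_surjective _ x
  have ha : evalOne n (a : Rq n) = 0 := a.prop
  obtain ⟨m, hm, hmem⟩ := torsion_key hn hd (a : Rq n) ha
  refine ⟨⟨m, mem_nonZeroDivisors_of_ne_zero hm⟩, ?_⟩
  show m • (Submodule.Quotient.mk a : SGrp n d) = 0
  have hmk : m • (Submodule.Quotient.mk a : SGrp n d) = Submodule.Quotient.mk (m • a) :=
    (Submodule.Quotient.mk_smul _ m a).symm
  rw [hmk, Submodule.Quotient.mk_eq_zero]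
  show m • a ∈ _
  rw [Submodule.mem_comap]
  exact hmem

end Aux

/-- Theorem: `Σ_v f_v = 0`, the `f_v` with `v ≠ 0` are linearly independent over `ℚ`,
and consequently `S(n,d)` is a finite (abelian) group. -/
theorem fR_sum_zero_and_fQ_linearIndependent (n d : ℕ) (hn : 1 ≤ n) (hd : 2 ≤ d) [NeZero n] :
    (∑ v : ZMod n, fR n d v = 0) ∧
    LinearIndependent ℚ (fun v : {v : ZMod n // v ≠ 0} => fQ n d v.val) ∧
    Finite (SGrp n d) := by
  refine ⟨sum_fR (by omega), fQ_linearIndependent hd, SGrp_finite hn hd⟩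

end
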